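/- For pointed Kripke models (M,w) and (N,v), if N,v satisfies the graded modal d-type realized by (M,w), then there is a graded d-bisimulation between (M,w) and (N,v). -/

import Mathlib

/-- Formulas of graded modal logic (GML) over proposition symbols `P`. -/
inductive GML (P : Type) : Type
  | bot : GML P
  | prop : P → GML P
  | neg : GML P → GML P
  | and : GML P → GML P → GML P
  | or : GML P → GML P → GML P
  | dia : GML P → GML P
  | gdia : ℕ → GML P → GML P

/-- A Kripke model over proposition symbols `P` with node set `V`:
a finite labeled directed graph, given by a (finite) successor function and a labeling. -/
structure Kripke (P V : Type) where
  succ : V → Finset V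
  label : V → P → Prop

/-- Satisfaction of GML formulas at a node. -/
def Kripke.Sat {P V : Type} (M : Kripke P V) : GML P → V → Prop
  | .bot, _ => False
  | .prop p, v => M.label v p
  | .neg φ, v => ¬ M.Sat φ v
  | .and φ ψ, v => M.Sat φ v ∧ M.Sat ψ v
  | .or φ ψ, v => M.Sat φ v ∨ M.Sat ψ v
  | .dia φ, v => ∃ u ∈ M.succ v, M.Sat φ u
  | .gdia k φ, v => k ≤ {u | u ∈ M.succ v ∧ M.Sat φ u}.ncard

/-- Modal depth of a GML formula. -/
def GML.md {P : Type} : GML P → ℕ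
  | .bot => 0
  | .prop _ => 0
  | .neg φ => φ.md
  | .and φ ψ => max φ.md ψ.md
  | .or φ ψ => max φ.md ψ.md
  | .dia φ => φ.md + 1
  | .gdia _ φ => φ.md + 1

/-- `Z` is a graded `d`-bisimulation (a decreasing chain `Z 0 ⊇ ... ⊇ Z d` with
propositional harmony and back-and-forth matching of sequences of distinct successors). -/
def IsGradedBisim {P V W : Type} (M : Kripke P V) (N : Kripke P W) (d : ℕ)
    (Z : ℕ → V → W → Prop) : Prop :=
  (∀ i j, i ≤ j → j ≤ d → ∀ a b, Z j a b → Z i a b) ∧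
  (∀ i, i ≤ d → ∀ a b, Z i a b → ∀ p, M.label a p ↔ N.label b p) ∧
  (∀ i, 0 < i → i ≤ d → ∀ a b, Z i a b →
    ((∀ (k : ℕ) (f : Fin k → V), Function.Injective f → (∀ j, f j ∈ M.succ a) →
        ∃ g : Fin k → W, Function.Injective g ∧ (∀ j, g j ∈ N.succ b) ∧
          ∀ j, Z (i - 1) (f j) (g j)) ∧
     (∀ (k : ℕ) (g : Fin k → W), Function.Injective g → (∀ j, g j ∈ N.succ b) →
        ∃ f : Fin k → V, Function.Injective f ∧ (∀ j, f j ∈ M.succ a) ∧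
          ∀ j, Z (i - 1) (f j) (g j))))

/-- There is a graded `d`-bisimulation between the pointed models `(M,w)` and `(N,v)`. -/
def GradedBisimilar {P V W : Type} (M : Kripke P V) (N : Kripke P W)
    (w : V) (v : W) (d : ℕ) : Prop :=
  ∃ Z, IsGradedBisim M N d Z ∧ Z d w v

def listAnd {P : Type} : List (GML P) → GML P
  | [] => .neg .bot
  | φ :: l => .and φ (listAnd l)

def listOr {P : Type} : List (GML P) → GML P
  | [] => .bot
  | φ :: l => .or φ (listOr l)

/-- `◊^{=k} φ`, i.e. `◊^{≥k} φ ∧ ¬ ◊^{≥k+1} φ`. -/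
def diaEq {P : Type} (k : ℕ) (φ : GML P) : GML P := .and (.gdia k φ) (.neg (.gdia (k+1) φ))

/-- `□ φ`, i.e. `¬ ◊ ¬ φ`. -/
def boxF {P : Type} (φ : GML P) : GML P := .neg (.dia (.neg φ))

/-- Graded modal 0-types: the formulas `⋀_{p ∈ Ψ} p ∧ ⋀_{p ∉ Ψ} ¬p` for `Ψ ⊆ P`. -/
def gType0 (P : Type) [Fintype P] [DecidableEq P] : Set (GML P) :=
  {φ | ∃ Ψ : Finset P, φ =
    listAnd (((Finset.univ : Finset P).toList).map
      fun p => if p ∈ Ψ then GML.prop p else GML.neg (GML.prop p))}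

/-- Graded modal `d`-types: `σ ∧ ⋀_{τ ∈ I} ◊^{=count τ} τ ∧ □ ⋁_{τ ∈ I} τ` with `σ` a
0-type, `I` a finite set of `d`-types and `count : I → ℤ₊`. -/
def gType (P : Type) [Fintype P] [DecidableEq P] : ℕ → Set (GML P)
  | 0 => gType0 P
  | (d+1) => {φ | ∃ σ ∈ gType0 P, ∃ L : List (GML P),
      (∀ τ ∈ L, τ ∈ gType P d) ∧ L.Nodup ∧
      ∃ count : GML P → ℕ, (∀ τ ∈ L, 0 < count τ) ∧
      φ = .and σ (.and (listAnd (L.map fun τ => diaEq (count τ) τ))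
            (boxF (listOr L)))}


/-! ### Auxiliary development -/

open scoped Classical

namespace GMLAux

variable {P X : Type}

/-- The Finset of successors of `x` satisfying `φ`. -/
noncomputable def satFinset (K : Kripke P X) (φ : GML P) (x : X) : Finset X :=
  (K.succ x).filter (fun u => K.Sat φ u)

lemma mem_satFinset {K : Kripke P X} {φ : GML P} {x u : X} :
    u ∈ satFinset K φ x ↔ u ∈ K.succ x ∧ K.Sat φ u := by
  simp [satFinset]

lemma satSet_eq (K : Kripke P X) (φ : GML P) (x : X) :
    {u | u ∈ K.succ x ∧ K.Sat φ u} = ↑(satFinset K φ x) := by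
  ext u; simp [mem_satFinset]

lemma sat_gdia {K : Kripke P X} {φ : GML P} {k : ℕ} {x : X} :
    K.Sat (.gdia k φ) x ↔ k ≤ (satFinset K φ x).card := by
  show k ≤ _ ↔ _
  rw [satSet_eq, Set.ncard_coe_finset]

lemma sat_dia {K : Kripke P X} {φ : GML P} {x : X} :
    K.Sat (.dia φ) x ↔ ∃ u ∈ K.succ x, K.Sat φ u := Iff.rfl

lemma sat_diaEq {K : Kripke P X} {φ : GML P} {k : ℕ} {x : X} :
    K.Sat (diaEq k φ) x ↔ (satFinset K φ x).card = k := by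
  show (K.Sat (.gdia k φ) x ∧ ¬ K.Sat (.gdia (k+1) φ) x) ↔ _
  rw [sat_gdia, sat_gdia]
  omega

lemma sat_boxF {K : Kripke P X} {φ : GML P} {x : X} :
    K.Sat (boxF φ) x ↔ ∀ u ∈ K.succ x, K.Sat φ u := by
  show (¬ ∃ u ∈ K.succ x, ¬ K.Sat φ u) ↔ _
  push_neg
  rfl

lemma sat_listAnd {K : Kripke P X} {l : List (GML P)} {x : X} :
    K.Sat (listAnd l) x ↔ ∀ φ ∈ l, K.Sat φ x := by
  induction l with
  | nil => simp [listAnd, Kripke.Sat]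
  | cons ψ l ih =>
    show (K.Sat ψ x ∧ K.Sat (listAnd l) x) ↔ _
    rw [ih]; simp

lemma sat_listOr {K : Kripke P X} {l : List (GML P)} {x : X} :
    K.Sat (listOr l) x ↔ ∃ φ ∈ l, K.Sat φ x := by
  induction l with
  | nil => simp [listOr, Kripke.Sat]
  | cons ψ l ih =>
    show (K.Sat ψ x ∨ K.Sat (listOr l) x) ↔ _
    rw [ih]; simp

lemma md_listAnd_le {l : List (GML P)} {i : ℕ} (h : ∀ φ ∈ l, GML.md φ ≤ i) :
    (listAnd l).md ≤ i := by
  induction l with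
  | nil => simp [listAnd, GML.md]
  | cons ψ l ih =>
    show max ψ.md (listAnd l).md ≤ i
    exact max_le (h ψ (by simp)) (ih fun φ hφ => h φ (by simp [hφ]))

lemma md_listOr_le {l : List (GML P)} {i : ℕ} (h : ∀ φ ∈ l, GML.md φ ≤ i) :
    (listOr l).md ≤ i := by
  induction l with
  | nil => simp [listOr, GML.md]
  | cons ψ l ih =>
    show max ψ.md (listOr l).md ≤ i
    exact max_le (h ψ (by simp)) (ih fun φ hφ => h φ (by simp [hφ]))

lemma md_diaEq {k : ℕ} {φ : GML P} : (diaEq k φ).md = φ.md + 1 := by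
  simp [diaEq, GML.md]

lemma md_boxF {φ : GML P} : (boxF φ).md = φ.md + 1 := by
  simp [boxF, GML.md]

lemma md_gType {Q : Type} [Fintype Q] [DecidableEq Q] :
    ∀ (d : ℕ) (τ : GML Q), τ ∈ gType Q d → τ.md ≤ d := by
  intro d
  induction d with
  | zero =>
    rintro τ ⟨Ψ, rfl⟩
    apply md_listAnd_le
    intro φ hφ
    simp only [List.mem_map] at hφ
    obtain ⟨p, -, rfl⟩ := hφ
    split <;> simp [GML.md]
  | succ d ih =>
    rintro τ ⟨σ, ⟨Ψ, rfl⟩, L, hL, -, count, -, rfl⟩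
    show max _ (max _ _) ≤ d + 1
    apply max_le
    · calc (listAnd _).md ≤ 0 := by
            apply md_listAnd_le; intro φ hφ
            simp only [List.mem_map] at hφ
            obtain ⟨p, -, rfl⟩ := hφ
            split <;> simp [GML.md]
        _ ≤ d + 1 := by omega
    · apply max_le
      · apply md_listAnd_le
        intro φ hφ
        simp only [List.mem_map] at hφ
        obtain ⟨τ', hτ', rfl⟩ := hφ
        rw [md_diaEq]
        exact Nat.succ_le_succ (ih τ' (hL τ' hτ'))
      · rw [md_boxF]
        exact Nat.succ_le_succ (md_listOr_le fun φ hφ => ih φ (hL φ hφ))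

/-- Agreement on all formulas of modal depth at most `i`. -/
def EqAt (K : Kripke P X) (i : ℕ) (x y : X) : Prop :=
  ∀ φ : GML P, φ.md ≤ i → (K.Sat φ x ↔ K.Sat φ y)

lemma EqAt.refl {K : Kripke P X} {i : ℕ} (x : X) : EqAt K i x x := fun _ _ => Iff.rfl

lemma EqAt.symm {K : Kripke P X} {i : ℕ} {x y : X} (h : EqAt K i x y) : EqAt K i y x :=
  fun φ hφ => (h φ hφ).symm

lemma EqAt.trans {K : Kripke P X} {i : ℕ} {x y z : X} (h : EqAt K i x y)
    (h' : EqAt K i y z) : EqAt K i x z :=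
  fun φ hφ => (h φ hφ).trans (h' φ hφ)

lemma EqAt.mono {K : Kripke P X} {i j : ℕ} {x y : X} (hij : i ≤ j) (h : EqAt K j x y) :
    EqAt K i x y := fun φ hφ => h φ (le_trans hφ hij)

end GMLAux
namespace GMLAux

variable {P X : Type}

/-- Characteristic formulas at depth `i` exist in a finite model. -/
lemma charForm [Fintype P] [Fintype X] (K : Kripke P X) (i : ℕ) (x : X) :
    ∃ χ : GML P, χ.md ≤ i ∧ ∀ y, (K.Sat χ y ↔ EqAt K i x y) := by
  have hsep : ∀ y : X, ∃ φ : GML P, φ.md ≤ i ∧ K.Sat φ x ∧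
      (¬ EqAt K i x y → ¬ K.Sat φ y) := by
    intro y
    by_cases h : EqAt K i x y
    · exact ⟨.neg .bot, by simp [GML.md], fun h' => h', fun h' => absurd h h'⟩
    · simp only [EqAt, not_forall] at h
      obtain ⟨φ, hφ, hne⟩ := h
      by_cases hx : K.Sat φ x
      · refine ⟨φ, hφ, hx, fun _ hy => hne (iff_of_true hx hy)⟩
      · refine ⟨.neg φ, hφ, hx, fun _ hy => ?_⟩
        exact hne (iff_of_false hx hy)
  choose F hFmd hFx hF using hsep
  refine ⟨listAnd ((Finset.univ : Finset X).toList.map F), md_listAnd_le ?_, fun y => ?_⟩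
  · intro φ hφ
    simp only [List.mem_map] at hφ
    obtain ⟨z, -, rfl⟩ := hφ
    exact hFmd z
  constructor
  · intro hy
    by_contra hne
    have hyy : K.Sat (F y) y := by
      rw [sat_listAnd] at hy
      exact hy (F y) (List.mem_map_of_mem (f := F) (by simp))
    exact hF y hne hyy
  · intro hxy
    rw [sat_listAnd]
    intro φ hφ
    simp only [List.mem_map] at hφ
    obtain ⟨z, -, rfl⟩ := hφ
    exact (hxy (F z) (hFmd z)).mp (hFx z)

/-- The matching ("forth") lemma inside one finite model. -/
lemma matchLemma [Fintype P] [Fintype X] (K : Kripke P X) {i : ℕ} (hi : 0 < i)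
    {x y : X} (hxy : EqAt K i x y) (k : ℕ) (f : Fin k → X)
    (hf : Function.Injective f) (hfs : ∀ j, f j ∈ K.succ x) :
    ∃ g : Fin k → X, Function.Injective g ∧ (∀ j, g j ∈ K.succ y) ∧
      ∀ j, EqAt K (i - 1) (f j) (g j) := by
  set m := i - 1 with hm
  have him : m + 1 = i := by omega
  -- equivalence classes among the chosen successors
  set A : Fin k → Finset (Fin k) :=
    fun j => Finset.univ.filter (fun j' => EqAt K m (f j) (f j')) with hA
  set B : Fin k → Finset X :=
    fun j => (K.succ y).filter (fun z => EqAt K m (f j) z) with hB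
  have hjA : ∀ j, j ∈ A j := by intro j; simp [hA, EqAt.refl]
  have hAeq : ∀ {j j'}, EqAt K m (f j) (f j') → A j = A j' := by
    intro j j' h
    ext j''
    simp only [hA, Finset.mem_filter, Finset.mem_univ, true_and]
    exact ⟨fun h' => h.symm.trans h', fun h' => h.trans h'⟩
  -- cardinality transfer via characteristic formulas
  have hcard : ∀ j, (A j).card ≤ (B j).card := by
    intro j
    obtain ⟨χ, hχmd, hχ⟩ := charForm K m (f j)
    have h1 : (A j).card ≤ (satFinset K χ x).card := by
      rw [← Finset.card_image_of_injective (A j) hf]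
      apply Finset.card_le_card
      intro u hu
      simp only [Finset.mem_image] at hu
      obtain ⟨j', hj', rfl⟩ := hu
      simp only [hA, Finset.mem_filter, Finset.mem_univ, true_and] at hj'
      exact mem_satFinset.mpr ⟨hfs j', (hχ (f j')).mpr hj'⟩
    have h2 : K.Sat (.gdia (A j).card χ) x := sat_gdia.mpr h1
    have h3 : K.Sat (.gdia (A j).card χ) y := by
      refine (hxy _ ?_).mp h2
      show χ.md + 1 ≤ i
      omega
    have h4 := sat_gdia.mp h3
    refine h4.trans (Finset.card_le_card ?_)
    intro u hu
    rw [mem_satFinset] at hu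
    simp only [hB, Finset.mem_filter]
    exact ⟨hu.1, (hχ u).mp hu.2⟩
  -- embeddings of each class into the matching successors of `y`
  have hemb : ∀ j, Nonempty (↥(A j) ↪ ↥(B j)) := by
    intro j
    rw [Function.Embedding.nonempty_iff_card_le, Fintype.card_coe, Fintype.card_coe]
    exact hcard j
  have hrepne : ∀ j, (A j).Nonempty := fun j => ⟨j, hjA j⟩
  set rep : Fin k → Fin k := fun j => (A j).min' (hrepne j) with hrep
  have hrepA : ∀ j, rep j ∈ A j := fun j => Finset.min'_mem _ _
  have hrepEq : ∀ j, EqAt K m (f j) (f (rep j)) := by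
    intro j
    have := hrepA j
    simpa only [hA, Finset.mem_filter, Finset.mem_univ, true_and] using this
  have hjArep : ∀ j, j ∈ A (rep j) := by
    intro j
    simp only [hA, Finset.mem_filter, Finset.mem_univ, true_and]
    exact (hrepEq j).symm
  have hrepCongr : ∀ {j j'}, EqAt K m (f j) (f j') → rep j = rep j' := by
    intro j j' h
    have hA' := hAeq h
    simp only [hrep]
    congr 1
  -- for each `j`, a partial matching of the class of `j` into `B j`
  have he : ∀ j, ∃ e : Fin k → X, Set.InjOn e (A j) ∧ ∀ j' ∈ A j, e j' ∈ B j := by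
    intro j
    obtain ⟨E⟩ := hemb j
    refine ⟨fun j' => if h : j' ∈ A j then (E ⟨j', h⟩ : X) else f j, ?_, ?_⟩
    · intro a ha b hb hab
      simp only [Finset.coe_mem, dif_pos (by simpa using ha), dif_pos (by simpa using hb)] at hab
      have := E.injective (Subtype.ext hab)
      exact congrArg Subtype.val this
    · intro j' hj'
      simp only [dif_pos hj']
      exact (E ⟨j', hj'⟩).2
  choose e heInj heB using he
  set g : Fin k → X := fun j => e (rep j) j with hg
  have hgB : ∀ j, g j ∈ B (rep j) := fun j => heB (rep j) j (hjArep j)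
  have hgEq : ∀ j, EqAt K m (f j) (g j) := by
    intro j
    have h1 := hgB j
    simp only [hB, Finset.mem_filter] at h1
    exact (hrepEq j).trans h1.2
  refine ⟨g, ?_, ?_, hgEq⟩
  · intro j j' hgg
    have h1 : EqAt K m (f j) (f j') :=
      (hgEq j).trans ((hgg ▸ (hgEq j') : EqAt K m (f j') (g j)).symm)
    have h2 : rep j = rep j' := hrepCongr h1
    have hgg' : e (rep j) j = e (rep j) j' := by
      have : g j = g j' := hgg
      rw [hg] at this
      simpa [h2] using this
    exact heInj (rep j) (hjArep j) (h2 ▸ hjArep j') hgg'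
  · intro j
    have h1 := hgB j
    simp only [hB, Finset.mem_filter] at h1
    exact h1.1

end GMLAux
namespace GMLAux

variable {P X : Type}

instance : Inhabited (GML P) := ⟨.bot⟩

lemma sat_gType0 [Fintype P] [DecidableEq P] {K : Kripke P X} {Ψ : Finset P} {x : X}
    (h : K.Sat (listAnd (((Finset.univ : Finset P).toList).map
      fun p => if p ∈ Ψ then GML.prop p else GML.neg (GML.prop p))) x) :
    ∀ p, K.label x p ↔ p ∈ Ψ := by
  intro p
  have hm : (if p ∈ Ψ then GML.prop p else GML.neg (GML.prop p)) ∈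
      ((Finset.univ : Finset P).toList).map
        (fun p => if p ∈ Ψ then GML.prop p else GML.neg (GML.prop p)) :=
    List.mem_map_of_mem (by simp [Finset.mem_toList])
  have hs := sat_listAnd.mp h _ hm
  by_cases hp : p ∈ Ψ
  · rw [if_pos hp] at hs
    exact iff_of_true hs hp
  · rw [if_neg hp] at hs
    exact iff_of_false hs hp

lemma eqAt_zero {K : Kripke P X} {x y : X} (h : ∀ p, K.label x p ↔ K.label y p) :
    EqAt K 0 x y := by
  intro φ hφ
  induction φ with
  | bot => exact Iff.rfl
  | prop p => exact h p
  | neg φ ih => exact not_congr (ih hφ)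
  | and φ ψ ihφ ihψ =>
    have hφ' : max φ.md ψ.md ≤ 0 := hφ
    exact and_congr (ihφ (by omega)) (ihψ (by omega))
  | or φ ψ ihφ ihψ =>
    have hφ' : max φ.md ψ.md ≤ 0 := hφ
    exact or_congr (ihφ (by omega)) (ihψ (by omega))
  | dia φ ih => exact absurd hφ (by simp [GML.md])
  | gdia k φ ih => exact absurd hφ (by simp [GML.md])

/-- A graded `d`-type determines the theory up to modal depth `d`. -/
lemma typeDetermines [Fintype P] [DecidableEq P] (K : Kripke P X) :
    ∀ (d : ℕ) (τ : GML P), τ ∈ gType P d →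
    ∀ x y : X, K.Sat τ x → K.Sat τ y → EqAt K d x y := by
  intro d
  induction d with
  | zero =>
    rintro τ ⟨Ψ, rfl⟩ x y hx hy
    exact eqAt_zero fun p => (sat_gType0 hx p).trans (sat_gType0 hy p).symm
  | succ d ih =>
    rintro τ ⟨σ, ⟨Ψ, rfl⟩, L, hL, hnd, count, hcpos, rfl⟩ x y hx hy
    obtain ⟨hxσ, hxc, hxb⟩ : _ ∧ _ ∧ _ := ⟨hx.1, hx.2.1, hx.2.2⟩
    obtain ⟨hyσ, hyc, hyb⟩ : _ ∧ _ ∧ _ := ⟨hy.1, hy.2.1, hy.2.2⟩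
    have hx1 : ∀ τ' ∈ L, (satFinset K τ' x).card = count τ' := by
      intro τ' h
      exact sat_diaEq.mp (sat_listAnd.mp hxc _ (List.mem_map_of_mem h))
    have hy1 : ∀ τ' ∈ L, (satFinset K τ' y).card = count τ' := by
      intro τ' h
      exact sat_diaEq.mp (sat_listAnd.mp hyc _ (List.mem_map_of_mem h))
    have hx2 : ∀ u ∈ K.succ x, ∃ τ' ∈ L, K.Sat τ' u := by
      intro u hu
      exact sat_listOr.mp (sat_boxF.mp hxb u hu)
    have hy2 : ∀ u ∈ K.succ y, ∃ τ' ∈ L, K.Sat τ' u := by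
      intro u hu
      exact sat_listOr.mp (sat_boxF.mp hyb u hu)
    have hlab : ∀ p, K.label x p ↔ K.label y p := fun p =>
      (sat_gType0 hxσ p).trans (sat_gType0 hyσ p).symm
    have hmdL : ∀ τ' ∈ L, (GML.md τ') ≤ d := fun τ' h => md_gType d τ' (hL τ' h)
    intro φ hφmd
    induction φ with
    | bot => exact Iff.rfl
    | prop p => exact hlab p
    | neg φ ihφ => exact not_congr (ihφ hφmd)
    | and φ ψ ihφ ihψ =>
      have hφ' : max φ.md ψ.md ≤ d + 1 := hφmd
      exact and_congr (ihφ (by omega)) (ihψ (by omega))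
    | or φ ψ ihφ ihψ =>
      have hφ' : max φ.md ψ.md ≤ d + 1 := hφmd
      exact or_congr (ihφ (by omega)) (ihψ (by omega))
    | dia φ₀ ihφ =>
      have hφ0 : φ₀.md ≤ d := by
        have : φ₀.md + 1 ≤ d + 1 := hφmd
        omega
      constructor
      · rintro ⟨u, hu, huφ⟩
        obtain ⟨τ', hτ'L, hsat⟩ := hx2 u hu
        have hpos : 0 < (satFinset K τ' y).card := by
          rw [hy1 τ' hτ'L]; exact hcpos τ' hτ'L
        obtain ⟨u', hu'⟩ := Finset.card_pos.mp hpos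
        rw [mem_satFinset] at hu'
        exact ⟨u', hu'.1, (ih τ' (hL τ' hτ'L) u u' hsat hu'.2 φ₀ hφ0).mp huφ⟩
      · rintro ⟨u, hu, huφ⟩
        obtain ⟨τ', hτ'L, hsat⟩ := hy2 u hu
        have hpos : 0 < (satFinset K τ' x).card := by
          rw [hx1 τ' hτ'L]; exact hcpos τ' hτ'L
        obtain ⟨u', hu'⟩ := Finset.card_pos.mp hpos
        rw [mem_satFinset] at hu'
        exact ⟨u', hu'.1, (ih τ' (hL τ' hτ'L) u u' hsat hu'.2 φ₀ hφ0).mp huφ⟩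
    | gdia k φ₀ ihφ =>
      have hφ0 : φ₀.md ≤ d := by
        have : φ₀.md + 1 ≤ d + 1 := hφmd
        omega
      -- the union-of-classes computation
      set good : GML P → Prop := fun τ' => ∃ u, K.Sat τ' u ∧ K.Sat φ₀ u with hgood
      set G : Finset (GML P) := L.toFinset.filter good with hG
      have hGL : ∀ τ' ∈ G, τ' ∈ L := by
        intro τ' h
        rw [hG, Finset.mem_filter, List.mem_toFinset] at h
        exact h.1
      have hGgood : ∀ τ' ∈ G, good τ' := by
        intro τ' h
        rw [hG, Finset.mem_filter] at h
        exact h.2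
      set SatEq : GML P → GML P → Prop := fun τ1 τ2 => ∀ u, K.Sat τ1 u ↔ K.Sat τ2 u
        with hSatEq
      have hclass : ∀ τ1 ∈ G, ∀ τ2 ∈ G, (∃ u, K.Sat τ1 u ∧ K.Sat τ2 u) →
          SatEq τ1 τ2 := by
        rintro τ1 h1 τ2 h2 ⟨u, hu1, hu2⟩
        intro w
        constructor
        · intro hw
          exact (ih τ1 (hL τ1 (hGL τ1 h1)) u w hu1 hw τ2 (hmdL τ2 (hGL τ2 h2))).mp hu2
        · intro hw
          exact (ih τ2 (hL τ2 (hGL τ2 h2)) u w hu2 hw τ1 (hmdL τ1 (hGL τ1 h1))).mp hu1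
      set C : GML P → Finset (GML P) := fun τ' => G.filter (fun τ2 => SatEq τ' τ2) with hC
      have hCcongr : ∀ {τ1 τ2}, SatEq τ1 τ2 → C τ1 = C τ2 := by
        intro τ1 τ2 h
        ext τ3
        simp only [hC, Finset.mem_filter, and_congr_right_iff]
        intro _
        constructor
        · intro h3 u; exact ((h u).symm).trans (h3 u)
        · intro h3 u; exact (h u).trans (h3 u)
      set repT : GML P → GML P := fun τ' => (C τ').toList.head! with hrepT
      have hCself : ∀ τ' ∈ G, τ' ∈ C τ' := by
        intro τ' h
        simp only [hC, Finset.mem_filter]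
        exact ⟨h, fun u => Iff.rfl⟩
      have hrepC : ∀ τ' ∈ G, repT τ' ∈ C τ' := by
        intro τ' h
        rw [hrepT]
        have hne : (C τ').toList ≠ [] := by
          intro hemp
          have h' : τ' ∈ (C τ').toList := Finset.mem_toList.mpr (hCself τ' h)
          rw [hemp] at h'
          exact List.not_mem_nil h'
        rw [← Finset.mem_toList]
        exact List.head!_mem_self hne
      have hrepG : ∀ τ' ∈ G, repT τ' ∈ G := by
        intro τ' h
        have := hrepC τ' h
        rw [hC, Finset.mem_filter] at this
        exact this.1
      have hrepSatEq : ∀ τ' ∈ G, SatEq τ' (repT τ') := by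
        intro τ' h
        have := hrepC τ' h
        rw [hC, Finset.mem_filter] at this
        exact this.2
      have hrepCongr : ∀ {τ1 τ2}, SatEq τ1 τ2 → repT τ1 = repT τ2 := by
        intro τ1 τ2 h
        simp only [hrepT]
        rw [hCcongr h]
      have hSatEqSymm : ∀ {τ1 τ2}, SatEq τ1 τ2 → SatEq τ2 τ1 :=
        fun h u => (h u).symm
      set R : Finset (GML P) := G.image repT with hR
      have hRG : ∀ r ∈ R, r ∈ G := by
        intro r h
        rw [hR, Finset.mem_image] at h
        obtain ⟨τ0, h0, rfl⟩ := h
        exact hrepG τ0 h0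
      have hRfix : ∀ r ∈ R, repT r = r := by
        intro r h
        rw [hR, Finset.mem_image] at h
        obtain ⟨τ0, h0, rfl⟩ := h
        exact hrepCongr (hSatEqSymm (hrepSatEq τ0 h0))
      have keyUnion : ∀ z : X, (∀ u ∈ K.succ z, ∃ τ' ∈ L, K.Sat τ' u) →
          satFinset K φ₀ z = R.biUnion (fun r => satFinset K r z) := by
        intro z hz
        ext u
        rw [mem_satFinset, Finset.mem_biUnion]
        constructor
        · rintro ⟨hu, huφ⟩
          obtain ⟨τ', hτ'L, hsat⟩ := hz u hu
          have hτ'G : τ' ∈ G := by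
            rw [hG, Finset.mem_filter, List.mem_toFinset]
            exact ⟨hτ'L, u, hsat, huφ⟩
          refine ⟨repT τ', Finset.mem_image_of_mem _ hτ'G, ?_⟩
          rw [mem_satFinset]
          exact ⟨hu, (hrepSatEq τ' hτ'G u).mp hsat⟩
        · rintro ⟨r, hrR, hur⟩
          rw [mem_satFinset] at hur
          obtain ⟨u0, hru0, hφu0⟩ := hGgood r (hRG r hrR)
          refine ⟨hur.1, ?_⟩
          exact (ih r (hL r (hGL r (hRG r hrR))) u0 u hru0 hur.2 φ₀ hφ0).mp hφu0
      have keyDisj : ∀ z : X, ∀ r1 ∈ R, ∀ r2 ∈ R, r1 ≠ r2 →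
          Disjoint (satFinset K r1 z) (satFinset K r2 z) := by
        intro z r1 h1 r2 h2 hne
        rw [Finset.disjoint_left]
        intro u hu1 hu2
        rw [mem_satFinset] at hu1 hu2
        have hse : SatEq r1 r2 :=
          hclass r1 (hRG r1 h1) r2 (hRG r2 h2) ⟨u, hu1.2, hu2.2⟩
        apply hne
        rw [← hRfix r1 h1, ← hRfix r2 h2]
        exact hrepCongr hse
      have cardEq : ∀ z : X, (∀ u ∈ K.succ z, ∃ τ' ∈ L, K.Sat τ' u) →
          (∀ τ' ∈ L, (satFinset K τ' z).card = count τ') →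
          (satFinset K φ₀ z).card = ∑ r ∈ R, count r := by
        intro z hz hzc
        rw [keyUnion z hz, Finset.card_biUnion (keyDisj z)]
        exact Finset.sum_congr rfl fun r hr => hzc r (hGL r (hRG r hr))
      have hfin : (satFinset K φ₀ x).card = (satFinset K φ₀ y).card := by
        rw [cardEq x hx2 hx1, cardEq y hy2 hy1]
      rw [sat_gdia, sat_gdia, hfin]

end GMLAux
namespace GMLAux

variable {P V W : Type}

/-- The disjoint union of two Kripke models. -/
def sumModel (M : Kripke P V) (N : Kripke P W) : Kripke P (V ⊕ W) where
  succ := fun x => match x with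
    | .inl a => (M.succ a).map ⟨Sum.inl, Sum.inl_injective⟩
    | .inr b => (N.succ b).map ⟨Sum.inr, Sum.inr_injective⟩
  label := fun x p => match x with
    | .inl a => M.label a p
    | .inr b => N.label b p

lemma sumModel_succ_inl (M : Kripke P V) (N : Kripke P W) (a : V) :
    (sumModel M N).succ (.inl a) = (M.succ a).map ⟨Sum.inl, Sum.inl_injective⟩ := rfl

lemma sumModel_succ_inr (M : Kripke P V) (N : Kripke P W) (b : W) :
    (sumModel M N).succ (.inr b) = (N.succ b).map ⟨Sum.inr, Sum.inr_injective⟩ := rfl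

lemma sat_sum_inl (M : Kripke P V) (N : Kripke P W) (φ : GML P) :
    ∀ a : V, (sumModel M N).Sat φ (.inl a) ↔ M.Sat φ a := by
  induction φ with
  | bot => intro a; exact Iff.rfl
  | prop p => intro a; exact Iff.rfl
  | neg φ ih => intro a; exact not_congr (ih a)
  | and φ ψ ihφ ihψ => intro a; exact and_congr (ihφ a) (ihψ a)
  | or φ ψ ihφ ihψ => intro a; exact or_congr (ihφ a) (ihψ a)
  | dia φ ih =>
    intro a
    show (∃ u ∈ (M.succ a).map ⟨Sum.inl, Sum.inl_injective⟩, (sumModel M N).Sat φ u) ↔ _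
    constructor
    · rintro ⟨u, hu, hsat⟩
      rw [Finset.mem_map] at hu
      obtain ⟨w, hw, rfl⟩ := hu
      exact ⟨w, hw, (ih w).mp hsat⟩
    · rintro ⟨w, hw, hsat⟩
      exact ⟨.inl w, Finset.mem_map_of_mem _ hw, (ih w).mpr hsat⟩
  | gdia k φ ih =>
    intro a
    show k ≤ _ ↔ k ≤ _
    have : {u | u ∈ (sumModel M N).succ (.inl a) ∧ (sumModel M N).Sat φ u} =
        Sum.inl '' {u | u ∈ M.succ a ∧ M.Sat φ u} := by
      ext u
      simp only [Set.mem_image, Set.mem_setOf_eq, sumModel_succ_inl, Finset.mem_map,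
        Function.Embedding.coeFn_mk]
      constructor
      · rintro ⟨⟨w, hw, rfl⟩, hsat⟩
        exact ⟨w, ⟨hw, (ih w).mp hsat⟩, rfl⟩
      · rintro ⟨w, ⟨hw, hsat⟩, rfl⟩
        exact ⟨⟨w, hw, rfl⟩, (ih w).mpr hsat⟩
    rw [this, Set.ncard_image_of_injective _ Sum.inl_injective]

lemma sat_sum_inr (M : Kripke P V) (N : Kripke P W) (φ : GML P) :
    ∀ b : W, (sumModel M N).Sat φ (.inr b) ↔ N.Sat φ b := by
  induction φ with
  | bot => intro b; exact Iff.rfl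
  | prop p => intro b; exact Iff.rfl
  | neg φ ih => intro b; exact not_congr (ih b)
  | and φ ψ ihφ ihψ => intro b; exact and_congr (ihφ b) (ihψ b)
  | or φ ψ ihφ ihψ => intro b; exact or_congr (ihφ b) (ihψ b)
  | dia φ ih =>
    intro b
    show (∃ u ∈ (N.succ b).map ⟨Sum.inr, Sum.inr_injective⟩, (sumModel M N).Sat φ u) ↔ _
    constructor
    · rintro ⟨u, hu, hsat⟩
      rw [Finset.mem_map] at hu
      obtain ⟨w, hw, rfl⟩ := hu
      exact ⟨w, hw, (ih w).mp hsat⟩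
    · rintro ⟨w, hw, hsat⟩
      exact ⟨.inr w, Finset.mem_map_of_mem _ hw, (ih w).mpr hsat⟩
  | gdia k φ ih =>
    intro b
    show k ≤ _ ↔ k ≤ _
    have : {u | u ∈ (sumModel M N).succ (.inr b) ∧ (sumModel M N).Sat φ u} =
        Sum.inr '' {u | u ∈ N.succ b ∧ N.Sat φ u} := by
      ext u
      simp only [Set.mem_image, Set.mem_setOf_eq, sumModel_succ_inr, Finset.mem_map,
        Function.Embedding.coeFn_mk]
      constructor
      · rintro ⟨⟨w, hw, rfl⟩, hsat⟩
        exact ⟨w, ⟨hw, (ih w).mp hsat⟩, rfl⟩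
      · rintro ⟨w, ⟨hw, hsat⟩, rfl⟩
        exact ⟨⟨w, hw, rfl⟩, (ih w).mpr hsat⟩
    rw [this, Set.ncard_image_of_injective _ Sum.inr_injective]

end GMLAux

/-- if `(N,v)` satisfies the graded modal `d`-type realized by `(M,w)`,
then there is a graded `d`-bisimulation between `(M,w)` and `(N,v)`. -/
theorem type_implies_gradedBisim {P V W : Type} [Fintype P] [DecidableEq P]
    [Fintype V] [Fintype W]
    (M : Kripke P V) (N : Kripke P W) (w : V) (v : W) (d : ℕ)
    (τ : GML P) (hτ : τ ∈ gType P d) (hw : M.Sat τ w) (hv : N.Sat τ v) :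
    GradedBisimilar M N w v d := by

  classical
  set K := GMLAux.sumModel M N with hK
  refine ⟨fun i a b => GMLAux.EqAt K i (.inl a) (.inr b), ⟨?_, ?_, ?_⟩, ?_⟩
  · -- monotonicity
    intro i j hij _ a b hz
    exact GMLAux.EqAt.mono hij hz
  · -- propositional harmony
    intro i _ a b hz p
    exact hz (.prop p) (Nat.zero_le _)
  · -- back and forth
    intro i hi _ a b hz
    constructor
    · -- forth
      intro k f hf hfs
      have hf' : Function.Injective (fun j => (Sum.inl (f j) : V ⊕ W)) :=
        fun j j' h => hf (Sum.inl_injective h)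
      have hfs' : ∀ j, (Sum.inl (f j) : V ⊕ W) ∈ K.succ (.inl a) := by
        intro j
        rw [hK, GMLAux.sumModel_succ_inl]
        exact Finset.mem_map_of_mem _ (hfs j)
      obtain ⟨g', hg'inj, hg'succ, hg'eq⟩ := GMLAux.matchLemma K hi hz k _ hf' hfs'
      have hex : ∀ j, ∃ w, w ∈ N.succ b ∧ Sum.inr w = g' j := by
        intro j
        have := hg'succ j
        rw [hK, GMLAux.sumModel_succ_inr, Finset.mem_map] at this
        obtain ⟨w, hw, hw'⟩ := this
        exact ⟨w, hw, hw'⟩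
      choose g hg1 hg2 using hex
      refine ⟨g, ?_, hg1, ?_⟩
      · intro j j' h
        apply hg'inj
        rw [← hg2 j, ← hg2 j', h]
      · intro j
        have := hg'eq j
        rw [← hg2 j] at this
        exact this
    · -- back
      intro k g hg hgs
      have hg' : Function.Injective (fun j => (Sum.inr (g j) : V ⊕ W)) :=
        fun j j' h => hg (Sum.inr_injective h)
      have hgs' : ∀ j, (Sum.inr (g j) : V ⊕ W) ∈ K.succ (.inr b) := by
        intro j
        rw [hK, GMLAux.sumModel_succ_inr]
        exact Finset.mem_map_of_mem _ (hgs j)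
      obtain ⟨f', hf'inj, hf'succ, hf'eq⟩ :=
        GMLAux.matchLemma K hi (GMLAux.EqAt.symm hz) k _ hg' hgs'
      have hex : ∀ j, ∃ u, u ∈ M.succ a ∧ Sum.inl u = f' j := by
        intro j
        have := hf'succ j
        rw [hK, GMLAux.sumModel_succ_inl, Finset.mem_map] at this
        obtain ⟨u, hu, hu'⟩ := this
        exact ⟨u, hu, hu'⟩
      choose f hf1 hf2 using hex
      refine ⟨f, ?_, hf1, ?_⟩
      · intro j j' h
        apply hf'inj
        rw [← hf2 j, ← hf2 j', h]
      · intro j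
        have := (hf'eq j).symm
        rw [← hf2 j] at this
        exact this
  · -- the root nodes share the type τ
    exact GMLAux.typeDetermines K d τ hτ _ _
      ((GMLAux.sat_sum_inl M N τ w).mpr hw) ((GMLAux.sat_sum_inr M N τ v).mpr hv)
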